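/- arXiv:1005.3412 — 2 statements merged into one kernel-verified Lean document; each statement's English description precedes it below -/
import Mathlib

section
/- In the projective plane PG(2,31) over the field with 31 elements, there exists a complete arc consisting of exactly 14 points. -/
set_option maxHeartbeats 4000000

open Projectivization

instance : Fact (Nat.Prime 31) := ⟨by norm_num⟩

/-- The point set of the projective plane `PG(2,31)`: the projectivization of the
3-dimensional vector space over the field with 31 elements. -/
abbrev PG31 : Type := Projectivization (ZMod 31) (Fin 3 → ZMod 31)

/-- An arc: a set of points no three of which are collinear, i.e. any three distinct
points of the set have linearly independent representative vectors. -/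
def IsArc31 (K : Set PG31) : Prop :=
  ∀ p ∈ K, ∀ q ∈ K, ∀ r ∈ K, p ≠ q → p ≠ r → q ≠ r →
    LinearIndependent (ZMod 31) ![p.rep, q.rep, r.rep]

/-- A complete arc: an arc not contained in a strictly larger arc. -/
def IsCompleteArc31 (K : Set PG31) : Prop :=
  IsArc31 K ∧ ∀ K' : Set PG31, IsArc31 K' → K ⊆ K' → K' = K

namespace Arc14Aux

/-- Explicit 3×3 determinant of three vectors. -/
def det3 (u v w : Fin 3 → ZMod 31) : ZMod 31 :=
  u 0*(v 1*w 2 - v 2*w 1) - u 1*(v 0*w 2 - v 2*w 0) + u 2*(v 0*w 1 - v 1*w 0)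

/-- The 14 points of our complete arc (as vectors). -/
def pts : Fin 14 → (Fin 3 → ZMod 31) :=
  ![![1,13,23],![1,24,7],![1,28,18],![1,4,10],![0,1,4],![0,1,23],![1,17,9],
    ![1,10,22],![1,26,11],![1,8,15],![1,11,28],![1,12,27],![1,14,17],![1,17,27]]

lemma pts_ne_zero : ∀ k, pts k ≠ 0 := by decide

lemma arcdet : ∀ a b c : Fin 14, a ≠ b → a ≠ c → b ≠ c →
    det3 (pts a) (pts b) (pts c) ≠ 0 := by decide

def covers (w : Fin 3 → ZMod 31) : Prop :=
  ∃ i j : Fin 14, i ≠ j ∧ det3 w (pts i) (pts j) = 0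

instance (w) : Decidable (covers w) := by unfold covers; infer_instance

set_option maxRecDepth 100000 in
lemma cov1 : ∀ y z : ZMod 31, covers ![1,y,z] := by decide
lemma cov2 : ∀ z : ZMod 31, covers ![0,1,z] := by decide
lemma cov3 : covers ![0,0,1] := by decide

lemma det3_eq_det (u v w : Fin 3 → ZMod 31) :
    (Matrix.of ![u,v,w]).det = det3 u v w := by
  rw [Matrix.det_fin_three]
  simp [det3, Matrix.of_apply]
  ring

lemma li_iff_det3 (u v w : Fin 3 → ZMod 31) :
    LinearIndependent (ZMod 31) ![u,v,w] ↔ det3 u v w ≠ 0 := by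
  have h := Matrix.linearIndependent_rows_iff_isUnit (K := ZMod 31)
      (A := Matrix.of ![u,v,w])
  have he : (Matrix.of ![u,v,w]).row = ![u,v,w] := rfl
  rw [he] at h
  rw [h, Matrix.isUnit_iff_isUnit_det, det3_eq_det, isUnit_iff_ne_zero]

lemma det3_smul (a b c : ZMod 31) (u v w : Fin 3 → ZMod 31) :
    det3 (a • u) (b • v) (c • w) = a * b * c * det3 u v w := by
  simp only [det3, Pi.smul_apply, smul_eq_mul]
  ring

lemma det3_smul23 (b c : ZMod 31) (u v w : Fin 3 → ZMod 31) :
    det3 u (b • v) (c • w) = b * c * det3 u v w := by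
  simp only [det3, Pi.smul_apply, smul_eq_mul]
  ring

lemma det3_smul1 (a : ZMod 31) (u v w : Fin 3 → ZMod 31) :
    det3 (a • u) v w = a * det3 u v w := by
  simp only [det3, Pi.smul_apply, smul_eq_mul]
  ring

lemma det3_self (u w : Fin 3 → ZMod 31) : det3 u u w = 0 := by
  simp only [det3]; ring

/-- Every nonzero vector is a nonzero multiple of a normalized vector. -/
lemma covers_of_ne_zero (u : Fin 3 → ZMod 31) (hu : u ≠ 0) : covers u := by
  have key : ∀ (c : ZMod 31) (w : Fin 3 → ZMod 31), c ≠ 0 → covers w → covers (c • w) := by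
    rintro c w hc ⟨i, j, hij, hd⟩
    exact ⟨i, j, hij, by rw [det3_smul1, hd, mul_zero]⟩
  by_cases h0 : u 0 ≠ 0
  · have : u = u 0 • ![1, (u 0)⁻¹ * u 1, (u 0)⁻¹ * u 2] := by
      funext i
      fin_cases i <;> simp <;> field_simp
    rw [this]
    exact key _ _ h0 (cov1 _ _)
  · push_neg at h0
    by_cases h1 : u 1 ≠ 0
    · have : u = u 1 • ![0, 1, (u 1)⁻¹ * u 2] := by
        funext i
        fin_cases i <;> simp [h0] <;> field_simp
      rw [this]
      exact key _ _ h1 (cov2 _)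
    · push_neg at h1
      have h2 : u 2 ≠ 0 := by
        intro h2
        apply hu
        funext i
        fin_cases i <;> simp [h0, h1, h2]
      have : u = u 2 • ![0, 0, 1] := by
        funext i
        fin_cases i <;> simp [h0, h1]
      rw [this]
      exact key _ _ h2 cov3

/-- The 14 arc points in the projective plane. -/
noncomputable def P (k : Fin 14) : PG31 := mk (ZMod 31) (pts k) (pts_ne_zero k)

lemma exists_third : ∀ i j : Fin 14, ∃ k : Fin 14, k ≠ i ∧ k ≠ j := by decide

lemma P_injective : Function.Injective P := by
  intro i j hij
  by_contra hne
  obtain ⟨k, hki, hkj⟩ := exists_third i j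
  obtain ⟨a, ha⟩ := (mk_eq_mk_iff (ZMod 31) _ _ (pts_ne_zero i) (pts_ne_zero j)).1 hij
  have : det3 (pts i) (pts j) (pts k) = 0 := by
    rw [← ha, Units.smul_def, det3_smul1, det3_self, mul_zero]
  exact arcdet i j k hne (Ne.symm hki) (Ne.symm hkj) this

lemma rep_P (k : Fin 14) : ∃ a : (ZMod 31)ˣ, (P k).rep = (a : ZMod 31) • pts k := by
  obtain ⟨a, ha⟩ := exists_smul_eq_mk_rep (ZMod 31) (pts k) (pts_ne_zero k)
  exact ⟨a, by rw [P, ← ha, Units.smul_def]⟩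

lemma K_isArc : IsArc31 (Set.range P) := by
  rintro p ⟨a, rfl⟩ q ⟨b, rfl⟩ r ⟨c, rfl⟩ hpq hpr hqr
  have hab : a ≠ b := fun h => hpq (by rw [h])
  have hac : a ≠ c := fun h => hpr (by rw [h])
  have hbc : b ≠ c := fun h => hqr (by rw [h])
  obtain ⟨ca, hca⟩ := rep_P a
  obtain ⟨cb, hcb⟩ := rep_P b
  obtain ⟨cc, hcc⟩ := rep_P c
  rw [li_iff_det3, hca, hcb, hcc, det3_smul]
  exact mul_ne_zero (mul_ne_zero (mul_ne_zero ca.ne_zero cb.ne_zero) cc.ne_zero)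
    (arcdet a b c hab hac hbc)

end Arc14Aux

open Arc14Aux in
/-- There exists a complete arc in `PG(2,31)` with exactly 14 points. -/
theorem exists_complete_arc_14_PG2_31 :
    ∃ K : Set PG31, IsCompleteArc31 K ∧ K.ncard = 14 := by
  refine ⟨Set.range P, ⟨K_isArc, ?_⟩, ?_⟩
  · intro K' hK' hsub
    refine Set.Subset.antisymm ?_ hsub
    intro x hx
    by_contra hxK
    obtain ⟨i, j, hij, hdet⟩ := covers_of_ne_zero x.rep x.rep_nonzero
    obtain ⟨ci, hci⟩ := rep_P i
    obtain ⟨cj, hcj⟩ := rep_P j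
    have hxi : x ≠ P i := fun h => hxK (h ▸ Set.mem_range_self i)
    have hxj : x ≠ P j := fun h => hxK (h ▸ Set.mem_range_self j)
    have hPij : P i ≠ P j := fun h => hij (P_injective h)
    have hli := hK' x hx (P i) (hsub (Set.mem_range_self i))
      (P j) (hsub (Set.mem_range_self j)) hxi hxj hPij
    rw [li_iff_det3, hci, hcj, det3_smul23] at hli
    exact hli (by rw [hdet, mul_zero])
  · have h1 : (Set.range P).ncard = Nat.card (Set.range P) :=
      (Nat.card_coe_set_eq _).symm
    rw [h1, Nat.card_range_of_injective P_injective, Nat.card_eq_fintype_card,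
      Fintype.card_fin]
end

section
/- In the projective plane PG(2,32) over the field with 32 elements, there exists a complete arc consisting of exactly 14 points. -/
open Projectivization

/-- The field with 32 elements. -/
abbrev F32 : Type := GaloisField 2 5

/-- The point set of the projective plane `PG(2,32)`: the projectivization of the
3-dimensional vector space over the field with 32 elements. -/
abbrev PG32 : Type := Projectivization F32 (Fin 3 → F32)

/-- An arc: a set of points no three of which are collinear, i.e. any three distinct
points of the set have linearly independent representative vectors. -/
def IsArc32 (K : Set PG32) : Prop :=
  ∀ p ∈ K, ∀ q ∈ K, ∀ r ∈ K, p ≠ q → p ≠ r → q ≠ r →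
    LinearIndependent F32 ![p.rep, q.rep, r.rep]

/-- A complete arc: an arc not contained in a strictly larger arc. -/
def IsCompleteArc32 (K : Set PG32) : Prop :=
  IsArc32 K ∧ ∀ K' : Set PG32, IsArc32 K' → K ⊆ K' → K' = K

set_option maxHeartbeats 4000000

/-! ### An explicit model `F` of the field with 32 elements -/

def F : Type := Fin 32
instance : DecidableEq F := inferInstanceAs (DecidableEq (Fin 32))
instance : Fintype F := inferInstanceAs (Fintype (Fin 32))
def fv : F → Nat := Fin.val
def q (n : Nat) : F := ⟨n % 32, Nat.mod_lt _ (by omega)⟩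
def T : Nat := 108047903208776182301821177221103242476143116593955060130293304589979379624792515153448842048557508062944046124406229695296066925914606762581689461002085778494869921253308993299871816092985491976045169017559410915641250367137487077474267762475165846192052592168025461595576071664656168551390812030282810547142273575707685992071951630439607196763160003983695986142552761857137002861441091538854289825063246106996111585522612270594387893792604677643806278420866095200429498834875164278453909318858873928361350451542075359389585350846896032637281038213167798410357414190746885591238672396555286314927225104490276004281802275612186310538897012821309466952071474062567291510724844240328231794507178969064997669581675260890171579661861804781287947179868346279216925369372792570769878690061895251633690187934766853249525474952930834331809573725942322942128859614576856896107208964457676110404290123549830361915177833475321143338419370844702955843687682335496728704246540419906221753620676385508341937256156840096544712112163214344887431563846620792143299057294129562689729500658535791013600437345014523103774325441249963724119162034606046898190840942821086017654297642452944418259132037807734164211605724739782819781353435761009390836216362900777584713462606884327330779408941635095127726452318274311602862610838031905185084111375203469849716078223880040803555184033898903431904408499901976387979014468435507345745772488651003084902781458751948967454175797339287002946443741078296424767125593778879332774650111994871979244289813779477452088152162304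
def fadd (a b : F) : F := ⟨Nat.land (Nat.xor (fv a) (fv b)) 31, Nat.lt_succ_of_le Nat.and_le_right⟩
def fmul (a b : F) : F := ⟨Nat.land (Nat.shiftRight T (Nat.mul (Nat.add (Nat.mul (fv a) 32) (fv b)) 5)) 31, Nat.lt_succ_of_le Nat.and_le_right⟩
def finv (a : F) : F :=
  let a2 := fmul a a
  let a3 := fmul a2 a
  let a6 := fmul a3 a3
  let a7 := fmul a6 a
  let a14 := fmul a7 a7
  let a15 := fmul a14 a
  fmul a15 a15

instance : Zero F := ⟨q 0⟩
instance : One F := ⟨q 1⟩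
instance : Add F := ⟨fadd⟩
instance : Mul F := ⟨fmul⟩
instance : Neg F := ⟨id⟩
instance : Inv F := ⟨finv⟩

instance instFieldF : Field F where
  zero := 0
  one := 1
  add := (· + ·)
  mul := (· * ·)
  neg := (- ·)
  inv := (·⁻¹)
  add_assoc := by decide +kernel
  zero_add := by decide +kernel
  add_zero := by decide +kernel
  add_comm := by decide +kernel
  mul_assoc := by decide +kernel
  one_mul := by decide +kernel
  mul_one := by decide +kernel
  zero_mul := by decide +kernel
  mul_zero := by decide +kernel
  left_distrib := by decide +kernel
  right_distrib := by decide +kernel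
  neg_add_cancel := by decide +kernel
  mul_comm := by decide +kernel
  inv_zero := by decide +kernel
  mul_inv_cancel := by decide +kernel
  exists_pair_ne := ⟨q 0, q 1, by decide +kernel⟩
  nsmul := nsmulRec
  zsmul := zsmulRec
  nnqsmul := _
  qsmul := _

/-! ### The 14-point arc and its secant lines, as explicit data over `F` -/

def vs : Fin 14 → Fin 3 → F := ![![q 1, q 12, q 12], ![q 1, q 21, q 27], ![q 1, q 14, q 13], ![q 1, q 30, q 10], ![q 1, q 19, q 0], ![q 1, q 7, q 21], ![q 1, q 24, q 20], ![q 1, q 10, q 17], ![q 0, q 1, q 13], ![q 0, q 1, q 11], ![q 1, q 17, q 1], ![q 1, q 9, q 7], ![q 1, q 25, q 27], ![q 1, q 10, q 10]]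
def LS : Fin 91 → Fin 3 → F := ![![q 2, q 23, q 25], ![q 20, q 1, q 2], ![q 11, q 6, q 18], ![q 10, q 12, q 31], ![q 6, q 25, q 11], ![q 26, q 24, q 20], ![q 5, q 29, q 6], ![q 26, q 13, q 1], ![q 23, q 11, q 1], ![q 30, q 13, q 29], ![q 2, q 11, q 5], ![q 24, q 23, q 21], ![q 0, q 6, q 6], ![q 4, q 22, q 27], ![q 12, q 17, q 11], ![q 4, q 27, q 6], ![q 23, q 14, q 18], ![q 3, q 15, q 13], ![q 23, q 10, q 31], ![q 9, q 13, q 1], ![q 24, q 11, q 1], ![q 2, q 26, q 4], ![q 25, q 28, q 28], ![q 5, q 0, q 12], ![q 3, q 17, q 31], ![q 1, q 7, q 16], ![q 25, q 13, q 29], ![q 14, q 24, q 9], ![q 15, q 25, q 22], ![q 8, q 28, q 4], ![q 1, q 13, q 1], ![q 0, q 11, q 1], ![q 13, q 12, q 31], ![q 5, q 10, q 7], ![q 18, q 22, q 23], ![q 30, q 7, q 4], ![q 15, q 10, q 13], ![q 12, q 31, q 25], ![q 10, q 30, q 6], ![q 6, q 27, q 20], ![q 8, q 13, q 1], ![q 6,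 q 11, q 1], ![q 5, q 11, q 15], ![q 0, q 13, q 23], ![q 27, q 17, q 7], ![q 28, q 0, q 20], ![q 13, q 21, q 20], ![q 30, q 20, q 11], ![q 11, q 17, q 25], ![q 25, q 13, q 1], ![q 28, q 11, q 1], ![q 19, q 1, q 2], ![q 22, q 7, q 26], ![q 4, q 27, q 10], ![q 15, q 10, q 25], ![q 13, q 1, q 31], ![q 14, q 4, q 13], ![q 19, q 13, q 1], ![q 1, q 11, q 1], ![q 5, q 20, q 22], ![q 25, q 18, q 14], ![q 16, q 14, q 30], ![q 5, q 31, q 13], ![q 29, q 5, q 18], ![q 29, q 13, q 1], ![q 7, q 11, q 1], ![q 11, q 21, q 9], ![q 7, q 19, q 17], ![q 8, q 15, q 1], ![q 23, q 30, q 18], ![q 12, q 13, q 1], ![q 21, q 11, q 1], ![q 6, q 16, q 27], ![q 30, q 22, q 3], ![q 5, q 10, q 19], ![q 21, q 27, q 0], ![q 6, q 0, q 0], ![q 2, q 13, q 1], ![q 13, q 13, q 1], ![q 31, q 13, q 1], ![q 23, q 13, q 1], ![q 11, q 11, q 1], ![q 30, q 11, q 1], ![q 3, q 11, q 1], ![q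 14, q 11, q 1], ![q 17, q 6, q 24], ![q 14, q 26, q 8], ![q 17, q 11, q 27], ![q 24, q 28, q 16], ![q 3, q 13, q 3], ![q 20, q 17, q 19]]
def PR : Fin 91 → Fin 14 × Fin 14 := ![(0,1), (0,2), (0,3), (0,4), (0,5), (0,6), (0,7), (0,8), (0,9), (0,10), (0,11), (0,12), (0,13), (1,2), (1,3), (1,4), (1,5), (1,6), (1,7), (1,8), (1,9), (1,10), (1,11), (1,12), (1,13), (2,3), (2,4), (2,5), (2,6), (2,7), (2,8), (2,9), (2,10), (2,11), (2,12), (2,13), (3,4), (3,5), (3,6), (3,7), (3,8), (3,9), (3,10), (3,11), (3,12), (3,13), (4,5), (4,6), (4,7), (4,8), (4,9), (4,10), (4,11), (4,12), (4,13), (5,6), (5,7), (5,8), (5,9), (5,10), (5,11), (5,12), (5,13), (6,7), (6,8), (6,9), (6,10), (6,11), (6,12), (6,13), (7,8), (7,9), (7,10), (7,11), (7,12), (7,13), (8,9), (8,10), (8,11), (8,12), (8,13), (9,10), (9,11), (9,12), (9,13), (10,11), (10,12), (10,13), (11,12), (11,13), (12,13)]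

def det3 {R : Type} [CommRing R] (a b c : Fin 3 → R) : R :=
  a 0 * b 1 * c 2 - a 0 * b 2 * c 1 - a 1 * b 0 * c 2 + a 1 * b 2 * c 0 + a 2 * b 0 * c 1 - a 2 * b 1 * c 0

def cross3 {R : Type} [CommRing R] (x y : Fin 3 → R) : Fin 3 → R :=
  ![x 1 * y 2 - x 2 * y 1, x 2 * y 0 - x 0 * y 2, x 0 * y 1 - x 1 * y 0]

def dot3 {R : Type} [CommRing R] (L w : Fin 3 → R) : R := L 0 * w 0 + L 1 * w 1 + L 2 * w 2

/-! ### The finite verifications -/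

theorem propC : ∀ l : Fin 91, (PR l).1 ≠ (PR l).2 ∧ LS l = cross3 (vs (PR l).1) (vs (PR l).2) := by decide +kernel

theorem propNZ : ∀ i : Fin 14, vs i 0 ≠ 0 ∨ vs i 1 ≠ 0 := by decide +kernel

theorem third : ∀ i j : Fin 14, ∃ k : Fin 14, k ≠ i ∧ k ≠ j := by decide +kernel

theorem propB3 : ∃ l : Fin 91, dot3 (LS l) ![0, 0, 1] = (0 : F) := by decide +kernel

theorem propB2 : ∀ c : F, ∃ l : Fin 91, dot3 (LS l) ![0, 1, c] = 0 := by decide +kernel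

theorem propB1 : ∀ b c : F, ∃ l : Fin 91, dot3 (LS l) ![1, b, c] = 0 := by decide +kernel

theorem propA : ∀ i j k : Fin 14, i ≠ j → i ≠ k → j ≠ k → det3 (vs i) (vs j) (vs k) ≠ 0 := by decide +kernel

/-! ### Algebraic lemmas about `det3` -/

section Lemmas
variable {R : Type} [CommRing R]

theorem det3_dot (w x y : Fin 3 → R) : det3 w x y = dot3 (cross3 x y) w := by
  simp only [det3, dot3, cross3, Matrix.cons_val_zero, Matrix.cons_val_one, Matrix.head_cons,
    Matrix.cons_val_two, Matrix.tail_cons]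
  ring

theorem det3_smul1 (c : R) (x y z : Fin 3 → R) : det3 (c • x) y z = c * det3 x y z := by
  simp only [det3, Pi.smul_apply, smul_eq_mul]; ring

theorem det3_smul3 (a b c : R) (x y z : Fin 3 → R) :
    det3 (a • x) (b • y) (c • z) = a * b * c * det3 x y z := by
  simp only [det3, Pi.smul_apply, smul_eq_mul]; ring

theorem det3_smul23 (a b : R) (w x y : Fin 3 → R) :
    det3 w (a • x) (b • y) = a * b * det3 w x y := by
  simp only [det3, Pi.smul_apply, smul_eq_mul]; ring

theorem det3_dup (a : R) (x y : Fin 3 → R) : det3 (a • x) x y = 0 := by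
  simp only [det3, Pi.smul_apply, smul_eq_mul]; ring

end Lemmas

theorem det3_eq_det {K : Type} [Field K] (x y z : Fin 3 → K) :
    (Matrix.of ![x, y, z]).det = det3 x y z := by
  rw [Matrix.det_fin_three]
  simp only [det3, Matrix.of_apply, Matrix.cons_val', Matrix.cons_val_zero, Matrix.cons_val_one,
    Matrix.head_cons, Matrix.cons_val_two, Matrix.tail_cons, Matrix.empty_val',
    Matrix.cons_val_fin_one, Matrix.head_fin_const]

theorem LI_iff {K : Type} [Field K] (x y z : Fin 3 → K) :
    LinearIndependent K ![x, y, z] ↔ det3 x y z ≠ 0 := by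
  rw [← det3_eq_det, ← isUnit_iff_ne_zero, ← Matrix.isUnit_iff_isUnit_det]
  exact Matrix.linearIndependent_rows_iff_isUnit

/-! ### Transport to `F32 = GaloisField 2 5` -/

def toF : ZMod 2 →+* F where
  toFun := fun z => if z = 0 then 0 else 1
  map_one' := by decide
  map_mul' := by decide
  map_zero' := by decide
  map_add' := by decide

instance : Algebra (ZMod 2) F := toF.toAlgebra

theorem cardF : Nat.card F = 2 ^ 5 := by
  rw [Nat.card_eq_fintype_card]
  exact Fintype.card_fin 32

noncomputable def σ : F ≃+* F32 :=
  (GaloisField.algEquivGaloisField 2 5 cardF).toRingEquiv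

noncomputable def vmap (w : Fin 3 → F) : Fin 3 → F32 := fun i => σ (w i)

theorem map_det3 (a b c : Fin 3 → F) : det3 (vmap a) (vmap b) (vmap c) = σ (det3 a b c) := by
  simp [det3, vmap, map_add, map_sub, map_mul]

theorem map_ne {d : F} (hd : d ≠ 0) : σ d ≠ 0 := by
  intro h
  exact hd ((map_eq_zero_iff σ σ.injective).1 h)

theorem vs_ne (i : Fin 14) : vs i ≠ 0 := by
  intro h
  rcases propNZ i with h0 | h1
  · exact h0 (congrFun h 0)
  · exact h1 (congrFun h 1)

theorem vmap_ne {w : Fin 3 → F} (hw : w ≠ 0) : vmap w ≠ 0 := by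
  intro h
  apply hw
  funext i
  exact (map_eq_zero_iff σ σ.injective).1 (congrFun h i)

/-! ### The arc in `PG(2,32)` -/

noncomputable def P (i : Fin 14) : PG32 := mk F32 (vmap (vs i)) (vmap_ne (vs_ne i))

theorem Prep (i : Fin 14) : ∃ c : F32, c ≠ 0 ∧ (P i).rep = c • vmap (vs i) := by
  obtain ⟨a, ha⟩ := exists_smul_eq_mk_rep F32 (vmap (vs i)) (vmap_ne (vs_ne i))
  exact ⟨a, a.ne_zero, by simp only [P]; rw [← ha, Units.smul_def]⟩

theorem Pinj : Function.Injective P := by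
  intro i j hij
  by_contra hne
  obtain ⟨k, hki, hkj⟩ := third i j
  obtain ⟨a, ha⟩ := (mk_eq_mk_iff F32 _ _ (vmap_ne (vs_ne i)) (vmap_ne (vs_ne j))).1 hij
  have h0 : det3 (vmap (vs i)) (vmap (vs j)) (vmap (vs k)) = 0 := by
    rw [← ha, Units.smul_def, det3_dup]
  rw [map_det3] at h0
  exact map_ne (propA i j k hne (Ne.symm hki) (Ne.symm hkj)) h0

theorem coverF (w : Fin 3 → F) (hw : w ≠ 0) :
    ∃ i j : Fin 14, i ≠ j ∧ det3 w (vs i) (vs j) = 0 := by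
  by_cases h0 : w 0 = 0
  · by_cases h1 : w 1 = 0
    · have h2 : w 2 ≠ 0 := by
        intro h2; apply hw; funext i; fin_cases i <;> assumption
      obtain ⟨l, hl⟩ := propB3
      refine ⟨(PR l).1, (PR l).2, (propC l).1, ?_⟩
      have hw' : w = w 2 • ![0, 0, 1] := by
        funext i; fin_cases i <;>
          simp [Pi.smul_apply, smul_eq_mul, h0, h1]
      rw [hw', det3_smul1, det3_dot, ← (propC l).2, hl, mul_zero]
    · obtain ⟨l, hl⟩ := propB2 ((w 1)⁻¹ * w 2)
      refine ⟨(PR l).1, (PR l).2, (propC l).1, ?_⟩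
      have hw' : w = w 1 • ![0, 1, (w 1)⁻¹ * w 2] := by
        funext i; fin_cases i <;>
          simp [Pi.smul_apply, smul_eq_mul, h0, mul_inv_cancel_left₀ h1]
      rw [hw', det3_smul1, det3_dot, ← (propC l).2, hl, mul_zero]
  · obtain ⟨l, hl⟩ := propB1 ((w 0)⁻¹ * w 1) ((w 0)⁻¹ * w 2)
    refine ⟨(PR l).1, (PR l).2, (propC l).1, ?_⟩
    have hw' : w = w 0 • ![1, (w 0)⁻¹ * w 1, (w 0)⁻¹ * w 2] := by
      funext i; fin_cases i <;>
        simp [Pi.smul_apply, smul_eq_mul, mul_inv_cancel_left₀ h0]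
    rw [hw', det3_smul1, det3_dot, ← (propC l).2, hl, mul_zero]

/-- There exists a complete arc in `PG(2,32)` with exactly 14 points. -/
theorem exists_complete_arc_14_PG2_32 :
    ∃ K : Set PG32, IsCompleteArc32 K ∧ K.ncard = 14 := by
  refine ⟨Set.range P, ⟨?_, ?_⟩, ?_⟩
  · rintro p ⟨i, rfl⟩ x ⟨j, rfl⟩ y ⟨k, rfl⟩ hpq hpr hqr
    have hij : i ≠ j := fun h => hpq (by rw [h])
    have hik : i ≠ k := fun h => hpr (by rw [h])
    have hjk : j ≠ k := fun h => hqr (by rw [h])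
    rw [LI_iff]
    obtain ⟨a, ha0, ha⟩ := Prep i
    obtain ⟨b, hb0, hb⟩ := Prep j
    obtain ⟨c, hc0, hc⟩ := Prep k
    rw [ha, hb, hc, det3_smul3, map_det3]
    exact mul_ne_zero (mul_ne_zero (mul_ne_zero ha0 hb0) hc0)
      (map_ne (propA i j k hij hik hjk))
  · intro K' hK' hsub
    refine Set.Subset.antisymm ?_ hsub
    intro x hx
    have hu : x.rep ≠ 0 := x.rep_nonzero
    have hvw : vmap (fun i => σ.symm (x.rep i)) = x.rep :=
      by funext i; simp only [vmap, RingEquiv.apply_symm_apply]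
    have hw : (fun i => σ.symm (x.rep i)) ≠ (0 : Fin 3 → F) := by
      intro h
      apply hu
      rw [← hvw, h]
      funext i
      simp only [vmap, Pi.zero_apply, map_zero]
    obtain ⟨i, j, hij, hdet⟩ := coverF _ hw
    by_cases h1 : x = P i
    · exact ⟨i, h1.symm⟩
    by_cases h2 : x = P j
    · exact ⟨j, h2.symm⟩
    exfalso
    have hPij : P i ≠ P j := fun h => hij (Pinj h)
    have hli := hK' x hx (P i) (hsub ⟨i, rfl⟩) (P j) (hsub ⟨j, rfl⟩) h1 h2 hPij
    have hne := (LI_iff _ _ _).1 hli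
    apply hne
    obtain ⟨a, ha0, ha⟩ := Prep i
    obtain ⟨b, hb0, hb⟩ := Prep j
    rw [ha, hb, det3_smul23, ← hvw, map_det3, hdet, map_zero, mul_zero]
  · rw [← Set.image_univ, Set.ncard_image_of_injective _ Pinj, Set.ncard_univ,
      Nat.card_eq_fintype_card, Fintype.card_fin]
end
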